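/- Let 1 < p < 2 and u_p(x) := -sin_p(π_p x)^{p-1} cos_p(π_p x)^{2-p} for x ∈ [0, 1/2]. Then u_p(x) = 0 if and only if x = 0 or x = 1/2, and min_{x ∈ [0,1/2]} u_p(x) = -c_p, where c_p = (p-1)^{(p-1)/p} (2-p)^{(2-p)/p}; moreover the minimum is attained exactly at the unique point m_p ∈ (0, 1/2) with cos_p(π_p m_p)^p = 2 - p. -/

import Mathlib

open Real Set

noncomputable def Fp (p y : ℝ) : ℝ := ∫ t in (0:ℝ)..y, (1 - t ^ p) ^ (-(1/p))

noncomputable def pip (p : ℝ) : ℝ := 2 * Fp p 1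

/-- `c_p = (p-1)^{(p-1)/p} (2-p)^{(2-p)/p}`. -/
noncomputable def cp (p : ℝ) : ℝ := (p - 1) ^ ((p - 1) / p) * (2 - p) ^ ((2 - p) / p)

open MeasureTheory intervalIntegral Filter Topology

/-- the integrand -/
noncomputable def gg (p t : ℝ) : ℝ := (1 - t ^ p) ^ (-(1/p))

set_option linter.unusedSectionVars false

section aux
variable {p : ℝ} (hp1 : 1 < p) (hp2 : p < 2)

include hp1

lemma hp0 : (0:ℝ) < p := lt_trans one_pos hp1

lemma base_pos {t : ℝ} (h0 : 0 ≤ t) (h1 : t < 1) : 0 < 1 - t ^ p := by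
  have := Real.rpow_lt_one h0 h1 (hp0 hp1)
  linarith

lemma base_nonneg {t : ℝ} (h0 : 0 ≤ t) (h1 : t ≤ 1) : 0 ≤ 1 - t ^ p := by
  have := Real.rpow_le_one h0 h1 (hp0 hp1).le
  linarith

lemma gg_nonneg {t : ℝ} (h0 : 0 ≤ t) (h1 : t ≤ 1) : 0 ≤ gg p t :=
  Real.rpow_nonneg (base_nonneg hp1 h0 h1) _

lemma gg_pos {t : ℝ} (h0 : 0 ≤ t) (h1 : t < 1) : 0 < gg p t :=
  Real.rpow_pos_of_pos (base_pos hp1 h0 h1) _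

lemma gg_meas : Measurable (gg p) := by unfold gg; fun_prop

lemma gg_contAt {t : ℝ} (h0 : 0 ≤ t) (h1 : t < 1) : ContinuousAt (gg p) t := by
  have h1' : ContinuousAt (fun t : ℝ => 1 - t ^ p) t :=
    ContinuousAt.sub continuousAt_const (Real.continuousAt_rpow_const t p (Or.inr (hp0 hp1).le))
  exact h1'.rpow_const (Or.inl (base_pos hp1 h0 h1).ne')

lemma gg_mono : MonotoneOn (gg p) (Ico 0 1) := by
  intro a ha b hb hab
  have h1 : a ^ p ≤ b ^ p := Real.rpow_le_rpow ha.1 hab (hp0 hp1).le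
  have := base_pos hp1 (ha.1.trans hab) hb.2
  have hpp := hp0 hp1
  exact Real.rpow_le_rpow_of_nonpos this (by linarith) (neg_nonpos.mpr (by positivity))

lemma gg_intble : IntervalIntegrable (gg p) volume 0 1 := by
  have hmaj : IntervalIntegrable (fun t : ℝ => (1 - t) ^ (-(1/p))) volume 0 1 := by
    have h := (intervalIntegral.intervalIntegrable_rpow' (a := 0) (b := 1)
      (r := -(1/p)) (by
        have := hp0 hp1
        have : 1/p < 1 := by
          rw [div_lt_one this]; exact hp1
        linarith)).comp_sub_left 1
    simpa using h.symm
  rw [intervalIntegrable_iff_integrableOn_Ioc_of_le (by norm_num)] at hmaj ⊢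
  refine hmaj.integrable.mono (gg_meas hp1).aestronglyMeasurable ?_
  rw [ae_restrict_iff' measurableSet_Ioc]
  filter_upwards with t ht
  have h0 : 0 ≤ t := ht.1.le
  have h1 : t ≤ 1 := ht.2
  rw [Real.norm_of_nonneg (gg_nonneg hp1 h0 h1),
      Real.norm_of_nonneg (Real.rpow_nonneg (by linarith) _)]
  have hpp := hp0 hp1
  have hexp : (0:ℝ) < 1/p := by positivity
  rcases eq_or_lt_of_le h1 with rfl | h1'
  · simp [gg, Real.one_rpow, Real.zero_rpow (neg_ne_zero.mpr hexp.ne')]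
  · have hb : 0 < 1 - t := by linarith
    have htp : t ^ p ≤ t := by
      calc t ^ p ≤ t ^ (1:ℝ) := Real.rpow_le_rpow_of_exponent_ge' h0 h1 one_pos.le hp1.le
      _ = t := Real.rpow_one t
    exact Real.rpow_le_rpow_of_nonpos hb (by linarith) (neg_nonpos.mpr hexp.le)

lemma gg_intble' {a b : ℝ} (ha : a ∈ Icc (0:ℝ) 1) (hb : b ∈ Icc (0:ℝ) 1) :
    IntervalIntegrable (gg p) volume a b :=
  (gg_intble hp1).mono_set (uIcc_subset_uIcc (by simpa using ha) (by simpa using hb))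

omit hp1 in
lemma Fp_eq {y : ℝ} : Fp p y = ∫ t in (0:ℝ)..y, gg p t := rfl

omit hp1 in
lemma Fp_zero : Fp p 0 = 0 := intervalIntegral.integral_same

lemma Fp_sub {a b : ℝ} (ha : a ∈ Icc (0:ℝ) 1) (hb : b ∈ Icc (0:ℝ) 1) :
    Fp p b - Fp p a = ∫ t in a..b, gg p t := by
  rw [Fp_eq, Fp_eq]
  have h1 : IntervalIntegrable (gg p) volume 0 a :=
    gg_intble' hp1 (by norm_num) ha
  have h2 : IntervalIntegrable (gg p) volume a b := gg_intble' hp1 ha hb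
  have := intervalIntegral.integral_add_adjacent_intervals h1 h2
  linarith

lemma Fp_strictMono : StrictMonoOn (Fp p) (Icc 0 1) := by
  intro a ha b hb hab
  have hpos : 0 < ∫ t in a..b, gg p t := by
    apply intervalIntegral_pos_of_pos_on (gg_intble' hp1 ha hb) _ hab
    intro t ht
    exact gg_pos hp1 (ha.1.trans ht.1.le) (lt_of_lt_of_le ht.2 hb.2)
  have := Fp_sub hp1 ha hb
  linarith

lemma Fp_cont : ContinuousOn (Fp p) (Icc 0 1) := by
  have h : IntegrableOn (gg p) (uIcc (0:ℝ) 1) volume := by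
    rw [uIcc_of_le (by norm_num)]
    rw [integrableOn_Icc_iff_integrableOn_Ioc]
    have := gg_intble hp1
    rw [intervalIntegrable_iff_integrableOn_Ioc_of_le (by norm_num)] at this
    exact this
  have := intervalIntegral.continuousOn_primitive_interval h
  rw [uIcc_of_le (by norm_num)] at this
  exact this

lemma Fp_one_pos : 0 < Fp p 1 := by
  have := Fp_strictMono hp1 (left_mem_Icc.mpr (by norm_num)) (right_mem_Icc.mpr (by norm_num))
    one_pos
  rw [Fp_zero] at this
  exact this

lemma pip_pos : 0 < pip p := by
  have := Fp_one_pos hp1; unfold pip; linarith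

lemma Fp_mem {y : ℝ} (hy : y ∈ Icc (0:ℝ) 1) : Fp p y ∈ Icc 0 (Fp p 1) := by
  constructor
  · rcases eq_or_lt_of_le hy.1 with rfl | h
    · rw [Fp_zero]
    · have := Fp_strictMono hp1 (left_mem_Icc.mpr (by norm_num)) hy h
      rw [Fp_zero] at this; exact this.le
  · rcases eq_or_lt_of_le hy.2 with rfl | h
    · exact le_rfl
    · exact (Fp_strictMono hp1 hy (right_mem_Icc.mpr (by norm_num)) h).le

lemma Fp_surj : SurjOn (Fp p) (Icc 0 1) (Icc 0 (Fp p 1)) := by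
  have := intermediate_value_Icc (by norm_num : (0:ℝ) ≤ 1) (Fp_cont hp1)
  rw [Fp_zero] at this
  exact this

lemma Fp_hasDeriv {y : ℝ} (h0 : 0 ≤ y) (h1 : y < 1) :
    HasDerivAt (Fp p) (gg p y) y := by
  apply intervalIntegral.integral_hasDerivAt_right
    (gg_intble' hp1 (by norm_num) ⟨h0, h1.le⟩)
  · exact ⟨univ, univ_mem, ((gg_meas hp1).aestronglyMeasurable).restrict⟩
  · exact gg_contAt hp1 h0 h1

omit hp1 in
lemma pip_half : pip p / 2 = Fp p 1 := by unfold pip; ring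

section s
variable {s : ℝ → ℝ}
    (hinv₁ : ∀ y ∈ Icc (0:ℝ) 1, s (Fp p y) = y)
    (hinv₂ : ∀ x ∈ Icc (0:ℝ) (pip p / 2), Fp p (s x) = x)

include hinv₁

lemma s_exists {x : ℝ} (hx : x ∈ Icc 0 (Fp p 1)) :
    ∃ y ∈ Icc (0:ℝ) 1, Fp p y = x ∧ s x = y := by
  obtain ⟨y, hy, hxy⟩ := Fp_surj hp1 hx
  exact ⟨y, hy, hxy, by rw [← hxy, hinv₁ y hy]⟩

lemma s_zero : s 0 = 0 := by
  have := hinv₁ 0 (by norm_num)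
  rwa [Fp_zero] at this

lemma s_top : s (Fp p 1) = 1 := hinv₁ 1 (by norm_num)

lemma s_mem {x : ℝ} (hx : x ∈ Icc 0 (Fp p 1)) : s x ∈ Icc (0:ℝ) 1 := by
  obtain ⟨y, hy, _, hs⟩ := s_exists hp1 hinv₁ hx
  rwa [hs]

lemma s_strictMono : StrictMonoOn s (Icc 0 (Fp p 1)) := by
  intro x1 hx1 x2 hx2 h12
  obtain ⟨y1, hy1, hF1, hs1⟩ := s_exists hp1 hinv₁ hx1
  obtain ⟨y2, hy2, hF2, hs2⟩ := s_exists hp1 hinv₁ hx2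
  rw [hs1, hs2]
  by_contra hle
  push_neg at hle
  have : Fp p y2 ≤ Fp p y1 := by
    rcases eq_or_lt_of_le hle with h | hlt
    · exact le_of_eq (by rw [h])
    · exact (Fp_strictMono hp1 hy2 hy1 hlt).le
  rw [hF1, hF2] at this
  linarith

lemma s_image_sup : Icc (0:ℝ) 1 ⊆ s '' Icc 0 (Fp p 1) := by
  intro y hy
  exact ⟨Fp p y, Fp_mem hp1 hy, hinv₁ y hy⟩

lemma s_mem_interior {θ : ℝ} (hθ : θ ∈ Ioo 0 (Fp p 1)) : s θ ∈ Ioo (0:ℝ) 1 := by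
  have h0 := s_strictMono hp1 hinv₁ (left_mem_Icc.mpr (Fp_one_pos hp1).le)
    (mem_Icc_of_Ioo hθ) hθ.1
  have h1 := s_strictMono hp1 hinv₁ (mem_Icc_of_Ioo hθ)
    (right_mem_Icc.mpr (Fp_one_pos hp1).le) hθ.2
  rw [s_zero hp1 hinv₁] at h0
  rw [s_top hp1 hinv₁] at h1
  exact ⟨h0, h1⟩

lemma s_contAt {θ : ℝ} (hθ : θ ∈ Ioo 0 (Fp p 1)) : ContinuousAt s θ := by
  apply (s_strictMono hp1 hinv₁).continuousAt_of_image_mem_nhds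
    (Icc_mem_nhds hθ.1 hθ.2)
  exact mem_of_superset
    (Icc_mem_nhds (s_mem_interior hp1 hinv₁ hθ).1 (s_mem_interior hp1 hinv₁ hθ).2)
    (s_image_sup hp1 hinv₁)

lemma s_contLeft : ContinuousWithinAt s (Iic (Fp p 1)) (Fp p 1) := by
  apply (s_strictMono hp1 hinv₁).continuousWithinAt_left_of_image_mem_nhdsWithin
    (Icc_mem_nhdsLE (Fp_one_pos hp1))
  rw [s_top hp1 hinv₁]
  exact mem_of_superset (Icc_mem_nhdsLE one_pos)
    (s_image_sup hp1 hinv₁)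

include hinv₂

lemma s_hasDeriv {θ : ℝ} (hθ : θ ∈ Ioo 0 (Fp p 1)) :
    HasDerivAt s ((1 - (s θ) ^ p) ^ (1/p)) θ := by
  have hy := s_mem_interior hp1 hinv₁ hθ
  have hF : HasDerivAt (Fp p) (gg p (s θ)) (s θ) := Fp_hasDeriv hp1 hy.1.le hy.2
  have hne : gg p (s θ) ≠ 0 := (gg_pos hp1 hy.1.le hy.2).ne'
  have hev : ∀ᶠ x in nhds θ, Fp p (s x) = x := by
    filter_upwards [Icc_mem_nhds hθ.1 hθ.2] with x hx
    exact hinv₂ x (by rwa [pip_half])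
  have := hF.of_local_left_inverse (s_contAt hp1 hinv₁ hθ) hne hev
  convert this using 1
  · rfl
  unfold gg
  rw [← Real.rpow_neg (base_nonneg hp1 hy.1.le hy.2.le), neg_neg]

lemma slope_bound {x : ℝ} (hx : x ∈ Ioo 0 (Fp p 1)) :
    (1 - s x) / (Fp p 1 - x) ≤ (1 - (s x) ^ p) ^ (1/p) := by
  have hy : s x ∈ Ioo (0:ℝ) 1 := s_mem_interior hp1 hinv₁ hx
  set y := s x with hyx
  have hFy : Fp p y = x := hinv₂ x (by rw [pip_half]; exact mem_Icc_of_Ioo hx)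
  have hint : Fp p 1 - x = ∫ t in y..1, gg p t := by
    rw [← hFy]
    exact Fp_sub hp1 (mem_Icc_of_Ioo hy) (by norm_num)
  have hggy : 0 < gg p y := gg_pos hp1 hy.1.le hy.2
  have hlow : (1 - y) * gg p y ≤ ∫ t in y..1, gg p t := by
    have hone : ∀ᵐ t ∂(volume : Measure ℝ), t ∉ ({1} : Set ℝ) :=
      measure_eq_zero_iff_ae_notMem.mp (measure_singleton 1)
    have hae : (fun _ : ℝ => gg p y) ≤ᵐ[(volume : Measure ℝ).restrict (Icc y 1)] gg p := by
      filter_upwards [ae_restrict_mem measurableSet_Icc, ae_restrict_of_ae hone] with t ht hne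
      exact gg_mono hp1 ⟨hy.1.le, hy.2⟩ ⟨hy.1.le.trans ht.1,
        lt_of_le_of_ne ht.2 (by simpa using hne)⟩ ht.1
    have := intervalIntegral.integral_mono_ae_restrict hy.2.le
      (intervalIntegrable_const) (gg_intble' hp1 (mem_Icc_of_Ioo hy) (by norm_num)) hae
    rwa [intervalIntegral.integral_const, smul_eq_mul] at this
  have hD : 0 < Fp p 1 - x := by
    rw [hint]; nlinarith [hy.2, hggy]
  rw [div_le_iff₀ hD]
  have hrw : (1 - y ^ p) ^ (1/p) = (gg p y)⁻¹ := by
    unfold gg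
    rw [← Real.rpow_neg (base_nonneg hp1 hy.1.le hy.2.le), neg_neg]
  rw [hrw]
  have hc : (gg p y)⁻¹ * gg p y = 1 := inv_mul_cancel₀ hggy.ne'
  have h2 : (gg p y)⁻¹ * ((1 - y) * gg p y) ≤ (gg p y)⁻¹ * (Fp p 1 - x) := by
    apply mul_le_mul_of_nonneg_left _ (inv_nonneg.mpr hggy.le)
    rw [hint]; exact hlow
  calc 1 - y = (gg p y)⁻¹ * ((1 - y) * gg p y) := by
        field_simp
      _ ≤ (gg p y)⁻¹ * (Fp p 1 - x) := h2

lemma deriv_s_T : deriv s (Fp p 1) = 0 := by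
  set T := Fp p 1 with hT
  have hT0 : 0 < T := Fp_one_pos hp1
  have hsT : s T = 1 := s_top hp1 hinv₁
  -- the candidate limit function
  have hφ : Tendsto (fun x => (1 - (s x) ^ p) ^ (1/p)) (nhdsWithin T (Iio T)) (nhds 0) := by
    have hs1 : Tendsto s (nhdsWithin T (Iio T)) (nhds 1) := by
      have := s_contLeft hp1 hinv₁
      rw [ContinuousWithinAt, hsT] at this
      exact this.mono_left (nhdsWithin_mono T Iio_subset_Iic_self)
    have hpp := hp0 hp1
    have hcont : ContinuousAt (fun y : ℝ => (1 - y ^ p) ^ (1/p)) 1 := by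
      have h1 : ContinuousAt (fun y : ℝ => 1 - y ^ p) 1 :=
        ContinuousAt.sub continuousAt_const (Real.continuousAt_rpow_const 1 p (Or.inl one_ne_zero))
      exact h1.rpow_const (Or.inr (by positivity))
    have htend := hcont.tendsto.comp hs1
    simp only [Function.comp_def] at htend
    convert htend using 2
    rw [Real.one_rpow, sub_self, Real.zero_rpow (one_div_ne_zero (ne_of_gt hpp))]
  have hbound : ∀ᶠ x in nhdsWithin T (Iio T),
      0 ≤ slope s T x ∧ slope s T x ≤ (1 - (s x) ^ p) ^ (1/p) := by
    filter_upwards [Ioo_mem_nhdsLT_of_mem (right_mem_Ioc.mpr hT0)] with x hx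
    have hy : s x ∈ Ioo (0:ℝ) 1 := s_mem_interior hp1 hinv₁ hx
    have hslope : slope s T x = (1 - s x) / (T - x) := by
      rw [slope_def_field, hsT]
      rw [div_eq_div_iff (by linarith [hx.2] : x - T ≠ 0) (by linarith [hx.2] : T - x ≠ 0)]
      ring
    constructor
    · rw [hslope]
      apply div_nonneg (by linarith [hy.2]) (by linarith [hx.2])
    · rw [hslope]
      exact slope_bound hp1 hinv₁ hinv₂ hx
  by_cases hd : DifferentiableAt ℝ s T
  · have hD : HasDerivAt s (deriv s T) T := hd.hasDerivAt
    rw [hasDerivAt_iff_tendsto_slope] at hD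
    have h1 : Tendsto (slope s T) (nhdsWithin T (Iio T)) (nhds (deriv s T)) :=
      hD.mono_left (nhdsWithin_mono T (fun x hx => ne_of_lt hx))
    have h0 : Tendsto (slope s T) (nhdsWithin T (Iio T)) (nhds 0) := by
      apply tendsto_of_tendsto_of_tendsto_of_le_of_le' tendsto_const_nhds hφ
      · filter_upwards [hbound] with x hx using hx.1
      · filter_upwards [hbound] with x hx using hx.2
    exact tendsto_nhds_unique h1 h0
  · exact deriv_zero_of_not_differentiableAt hd

end s

include hp2

lemma cp_pos : 0 < cp p :=
  mul_pos (Real.rpow_pos_of_pos (by linarith) _) (Real.rpow_pos_of_pos (by linarith) _)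

lemma key_ineq {a : ℝ} (ha : a ∈ Ioo (0:ℝ) 1) :
    a ^ ((p-1)/p) * (1-a) ^ ((2-p)/p) ≤ cp p ∧
    (a ^ ((p-1)/p) * (1-a) ^ ((2-p)/p) = cp p ↔ a = p - 1) := by
  have hpp := hp0 hp1
  have hw1 : (0:ℝ) < p - 1 := by linarith
  have hw2 : (0:ℝ) < 2 - p := by linarith
  set x1 := a / (p-1) with hx1
  set x2 := (1-a) / (2-p) with hx2
  have hx1p : 0 < x1 := div_pos ha.1 hw1
  have hx2p : 0 < x2 := div_pos (by linarith [ha.2]) hw2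
  have hsum : (p-1) * x1 + (2-p) * x2 = 1 := by
    rw [hx1, hx2]
    field_simp
    ring
  set Q := x1 ^ (p-1) * x2 ^ (2-p) with hQ
  have hQ0 : 0 ≤ Q := mul_nonneg (Real.rpow_nonneg hx1p.le _) (Real.rpow_nonneg hx2p.le _)
  -- Q ≤ 1, strict unless x1 = x2
  have hQle : x1 ≠ x2 → Q < 1 := by
    intro hne
    have hlog := strictConcaveOn_log_Ioi.2 (mem_Ioi.mpr hx1p) (mem_Ioi.mpr hx2p) hne hw1 hw2
      (by ring)
    simp only [smul_eq_mul] at hlog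
    rw [hsum] at hlog
    rw [Real.log_one] at hlog
    have : Q = Real.exp ((p-1) * Real.log x1 + (2-p) * Real.log x2) := by
      rw [Real.exp_add, hQ, Real.rpow_def_of_pos hx1p, Real.rpow_def_of_pos hx2p,
        mul_comm (Real.log x1), mul_comm (Real.log x2)]
    rw [this]
    calc Real.exp ((p-1) * Real.log x1 + (2-p) * Real.log x2) < Real.exp 0 :=
          Real.exp_lt_exp.mpr hlog
      _ = 1 := Real.exp_zero
  have hx1x2 : x1 = x2 → (a = p - 1 ∧ Q = 1) := by
    intro he
    have : x1 = 1 := by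
      rw [he] at hsum ⊢
      nlinarith
    have hax : a = p - 1 := by
      rw [hx1] at this
      field_simp at this
      linarith
    refine ⟨hax, ?_⟩
    have h2 : x2 = 1 := he ▸ this
    rw [hQ, this, h2, Real.one_rpow, Real.one_rpow, mul_one]
  have f1 : (x1 ^ (p-1)) ^ (1/p) = x1 ^ ((p-1)/p) := by
    rw [← Real.rpow_mul hx1p.le, mul_one_div]
  have f2 : (x2 ^ (2-p)) ^ (1/p) = x2 ^ ((2-p)/p) := by
    rw [← Real.rpow_mul hx2p.le, mul_one_div]
  have hGa : a ^ ((p-1)/p) * (1-a) ^ ((2-p)/p) = cp p * Q ^ (1/p) := by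
    have e1 : a = (p-1) * x1 := by rw [hx1]; field_simp
    have e2 : 1 - a = (2-p) * x2 := by rw [hx2]; field_simp
    have g1 : a ^ ((p-1)/p) = (p-1) ^ ((p-1)/p) * x1 ^ ((p-1)/p) := by
      rw [← Real.mul_rpow hw1.le hx1p.le, ← e1]
    have g2 : (1-a) ^ ((2-p)/p) = (2-p) ^ ((2-p)/p) * x2 ^ ((2-p)/p) := by
      rw [← Real.mul_rpow hw2.le hx2p.le, ← e2]
    rw [g1, g2, hQ,
      Real.mul_rpow (Real.rpow_nonneg hx1p.le _) (Real.rpow_nonneg hx2p.le _), f1, f2]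
    unfold cp
    ring
  have hcp := cp_pos hp1 hp2
  have hQle1 : Q ≤ 1 := by
    by_cases hne : x1 = x2
    · exact le_of_eq (hx1x2 hne).2
    · exact (hQle hne).le
  constructor
  · rw [hGa]
    calc cp p * Q ^ (1/p) ≤ cp p * 1 := by
          apply mul_le_mul_of_nonneg_left _ hcp.le
          exact Real.rpow_le_one hQ0 hQle1 (by positivity)
      _ = cp p := mul_one _
  · rw [hGa]
    constructor
    · intro hEq
      have hQp1 : Q ^ (1/p) = 1 :=
        mul_left_cancel₀ hcp.ne' (by rw [hEq, mul_one])
      have hee : x1 = x2 := by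
        by_contra hne
        have : Q ^ (1/p) < 1 := Real.rpow_lt_one hQ0 (hQle hne) (by positivity)
        rw [hQp1] at this
        exact lt_irrefl 1 this
      exact (hx1x2 hee).1
    · intro hae
      have h1 : x1 = 1 := by rw [hx1, hae]; field_simp
      have h2 : x2 = 1 := by rw [hx2, hae]; field_simp; ring
      rw [hQ, h1, h2, Real.one_rpow, Real.one_rpow, mul_one, Real.one_rpow, mul_one]

end aux

theorem up_zeros_and_min (p : ℝ) (hp1 : 1 < p) (hp2 : p < 2) (s : ℝ → ℝ)
    (hinv₁ : ∀ y ∈ Icc (0:ℝ) 1, s (Fp p y) = y)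
    (hinv₂ : ∀ x ∈ Icc (0:ℝ) (pip p / 2), Fp p (s x) = x)
    (u : ℝ → ℝ)
    (hu : ∀ x, u x = -(s (pip p * x) ^ (p - 1) * deriv s (pip p * x) ^ (2 - p))) :
    (∀ x ∈ Icc (0:ℝ) (1/2), (u x = 0 ↔ x = 0 ∨ x = 1/2)) ∧
    IsLeast (u '' Icc (0:ℝ) (1/2)) (-cp p) ∧
    (∃! m, m ∈ Ioo (0:ℝ) (1/2) ∧ deriv s (pip p * m) ^ p = 2 - p) ∧
    (∀ m ∈ Ioo (0:ℝ) (1/2), deriv s (pip p * m) ^ p = 2 - p →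
      ∀ x ∈ Icc (0:ℝ) (1/2), (u x = -cp p ↔ x = m)) := by
  have hpp : (0:ℝ) < p := hp0 hp1
  have hw1 : (0:ℝ) < p - 1 := by linarith
  have hw2 : (0:ℝ) < 2 - p := by linarith
  have hT0 : 0 < Fp p 1 := Fp_one_pos hp1
  have hpippos : 0 < pip p := pip_pos hp1
  have hpip2 : pip p = 2 * Fp p 1 := rfl
  have hcp : 0 < cp p := cp_pos hp1 hp2
  -- endpoint values
  have hu0 : u 0 = 0 := by
    rw [hu 0, mul_zero, s_zero hp1 hinv₁, Real.zero_rpow (by linarith : p - 1 ≠ 0),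
      zero_mul, neg_zero]
  have huh : u (1/2) = 0 := by
    have hhalf : pip p * (1/2) = Fp p 1 := by rw [hpip2]; ring
    rw [hu (1/2), hhalf, s_top hp1 hinv₁, deriv_s_T hp1 hinv₁ hinv₂,
      Real.zero_rpow (by linarith : 2 - p ≠ 0), mul_zero, neg_zero]
  -- the special point
  set y0 : ℝ := (p-1) ^ (1/p) with hy0def
  have hy0 : y0 ∈ Ioo (0:ℝ) 1 :=
    ⟨Real.rpow_pos_of_pos hw1 _, Real.rpow_lt_one hw1.le (by linarith) (by positivity)⟩
  have ha0 : y0 ^ p = p - 1 := by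
    rw [hy0def, ← Real.rpow_mul hw1.le, one_div_mul_cancel hpp.ne', Real.rpow_one]
  set θ0 : ℝ := Fp p y0 with hθ0def
  have hθ0 : θ0 ∈ Ioo 0 (Fp p 1) := by
    constructor
    · have := Fp_strictMono hp1 (left_mem_Icc.mpr zero_le_one) (mem_Icc_of_Ioo hy0) hy0.1
      rwa [Fp_zero] at this
    · exact Fp_strictMono hp1 (mem_Icc_of_Ioo hy0) (right_mem_Icc.mpr zero_le_one) hy0.2
  set m0 : ℝ := θ0 / pip p with hm0def
  have hpipm0 : pip p * m0 = θ0 := by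
    rw [hm0def]; field_simp
  have hm0 : m0 ∈ Ioo (0:ℝ) (1/2) := by
    constructor
    · exact div_pos hθ0.1 hpippos
    · rw [hm0def, div_lt_iff₀ hpippos, hpip2]
      linarith [hθ0.2]
  have hsm0 : s θ0 = y0 := hinv₁ y0 (mem_Icc_of_Ioo hy0)
  -- main interior analysis
  have hkey : ∀ x ∈ Ioo (0:ℝ) (1/2), ∃ A : ℝ, u x = -A ∧ 0 < A ∧ A ≤ cp p ∧
      (A = cp p ↔ x = m0) ∧ (deriv s (pip p * x) ^ p = 2 - p ↔ x = m0) := by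
    intro x hx
    set θ := pip p * x with hθdef
    have hθ : θ ∈ Ioo 0 (Fp p 1) := by
      constructor
      · exact mul_pos hpippos hx.1
      · rw [hθdef, hpip2]; nlinarith [hx.2]
    have hy : s θ ∈ Ioo (0:ℝ) 1 := s_mem_interior hp1 hinv₁ hθ
    set y := s θ with hydef
    set a := y ^ p with hadef
    have ha : a ∈ Ioo (0:ℝ) 1 :=
      ⟨Real.rpow_pos_of_pos hy.1 _, Real.rpow_lt_one hy.1.le hy.2 hpp⟩
    have hd : deriv s θ = (1 - a) ^ (1/p) := (s_hasDeriv hp1 hinv₁ hinv₂ hθ).deriv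
    -- x = m0 ↔ y = y0 ↔ a = p-1
    have hxm0 : a = p - 1 ↔ x = m0 := by
      constructor
      · intro haa
        have hyy0 : y = y0 := by
          have h1 : y ^ p = y0 ^ p := by rw [ha0, ← haa]
          by_contra hne
          rcases lt_or_gt_of_ne hne with h | h
          · have := Real.rpow_lt_rpow hy.1.le h hpp
            rw [h1] at this; exact lt_irrefl _ this
          · have := Real.rpow_lt_rpow hy0.1.le h hpp
            rw [h1] at this; exact lt_irrefl _ this
        have hθeq : θ = θ0 := by
          have := hinv₂ θ (by rw [pip_half]; exact mem_Icc_of_Ioo hθ)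
          rw [← hydef] at this
          rw [← this, hyy0, hθ0def]
        have := hθeq
        rw [hθdef, ← hpipm0] at this
        exact mul_left_cancel₀ hpippos.ne' this
      · intro hxx
        have : θ = θ0 := by rw [hθdef, hxx, hpipm0]
        rw [hadef, hydef, this, hsm0, ha0]
    -- the value
    have e5 : a ^ ((p-1)/p) = y ^ (p-1) := by
      have h6 : p * ((p-1)/p) = p - 1 := by field_simp
      rw [hadef, ← Real.rpow_mul hy.1.le, h6]
    have e6 : ((1 - a) ^ (1/p)) ^ (2-p) = (1 - a) ^ ((2-p)/p) := by
      have h7 : (1/p) * (2-p) = (2-p)/p := by ring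
      rw [← Real.rpow_mul (by linarith [ha.2] : (0:ℝ) ≤ 1 - a), h7]
    refine ⟨a ^ ((p-1)/p) * (1 - a) ^ ((2-p)/p), ?_, ?_, ?_, ?_, ?_⟩
    · rw [hu x, ← hθdef, ← hydef, hd, e6, e5]
    · exact mul_pos (Real.rpow_pos_of_pos ha.1 _)
        (Real.rpow_pos_of_pos (by linarith [ha.2]) _)
    · exact (key_ineq hp1 hp2 ha).1
    · rw [(key_ineq hp1 hp2 ha).2]; exact hxm0
    · rw [hd]
      have h8 : ((1 - a) ^ (1/p)) ^ p = 1 - a := by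
        rw [← Real.rpow_mul (by linarith [ha.2] : (0:ℝ) ≤ 1 - a),
          one_div_mul_cancel hpp.ne', Real.rpow_one]
      rw [h8]
      constructor
      · intro h; exact hxm0.mp (by linarith)
      · intro h; have := hxm0.mpr h; linarith
  -- now assemble
  have hm0mem : m0 ∈ Icc (0:ℝ) (1/2) := mem_Icc_of_Ioo hm0
  obtain ⟨A0, hA0u, hA0pos, hA0le, hA0eq, hA0d⟩ := hkey m0 hm0
  have hA0cp : A0 = cp p := hA0eq.mpr rfl
  have hum0 : u m0 = -cp p := by rw [hA0u, hA0cp]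
  -- case analysis helper
  have hcases : ∀ x ∈ Icc (0:ℝ) (1/2), x = 0 ∨ x = 1/2 ∨ x ∈ Ioo (0:ℝ) (1/2) := by
    intro x hx
    rcases eq_or_lt_of_le hx.1 with h | h
    · exact Or.inl h.symm
    rcases eq_or_lt_of_le hx.2 with h' | h'
    · exact Or.inr (Or.inl h')
    · exact Or.inr (Or.inr ⟨h, h'⟩)
  refine ⟨?_, ⟨⟨m0, hm0mem, hum0⟩, ?_⟩, ?_, ?_⟩
  · -- zeros
    intro x hx
    rcases hcases x hx with rfl | rfl | hxo
    · simp [hu0]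
    · norm_num [huh]
    · obtain ⟨A, hAu, hApos, _, _, _⟩ := hkey x hxo
      constructor
      · intro h; rw [hAu] at h; exfalso; linarith [hApos, neg_eq_zero.mp h]
      · rintro (rfl | rfl)
        · exact hu0
        · exact huh
  · -- lower bound
    rintro v ⟨x, hx, rfl⟩
    rcases hcases x hx with rfl | rfl | hxo
    · rw [hu0]; linarith
    · rw [huh]; linarith
    · obtain ⟨A, hAu, _, hAle, _, _⟩ := hkey x hxo
      rw [hAu]; linarith
  · -- existence and uniqueness
    refine ⟨m0, ⟨hm0, hA0d.mpr rfl⟩, ?_⟩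
    rintro m' ⟨hm', hd'⟩
    obtain ⟨A', _, _, _, _, hA'd⟩ := hkey m' hm'
    exact hA'd.mp hd'
  · -- equality characterization
    rintro m hm hd' x hx
    obtain ⟨Am, _, _, _, _, hAmd⟩ := hkey m hm
    have hmm0 : m = m0 := hAmd.mp hd'
    subst hmm0
    rcases hcases x hx with rfl | rfl | hxo
    · rw [hu0]
      constructor
      · intro h; exfalso; linarith
      · intro h; exfalso; exact hm0.1.ne h
    · rw [huh]
      constructor
      · intro h; exfalso; linarith
      · intro h; exfalso; exact hm0.2.ne h.symm
    · obtain ⟨A, hAu, _, _, hAeq, _⟩ := hkey x hxo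
      rw [hAu]
      constructor
      · intro h
        have : A = cp p := by linarith [neg_injective h]
        exact hAeq.mp this
      · intro h
        rw [hAeq.mpr h]
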